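/- Let X be a Baire topological space, {h_i : i ∈ I} a countable linearly ordered family of self-homeomorphisms of X that is weakly Archimedean, and {S_k : k ∈ ℕ} a countable family of essentially unbounded Baire subsets of X. Then for quasi all η ∈ X (all η off a meagre set) and every k ∈ ℕ there exists a cofinal subset J ⊆ I such that h_j(η) ∈ S_k for all j ∈ J. -/
import Mathlib


open Filter Set Topology

/-- Bitopological Kingman theorem.  Essential unboundedness is taken relative to a
fixed exhaustion `E : ℕ → Set X`; a set `S` is essentially unbounded if `S \ E m`
is non-meagre for every `m`. -/
theorem stmt_9 {X : Type*} [TopologicalSpace X] [BaireSpace X]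
    {I : Type*} [LinearOrder I] [Countable I]
    (hcof : ∀ i : I, ∃ j : I, i < j)
    (h : I → X ≃ₜ X)
    (E : ℕ → Set X)
    -- weak Archimedean property of the family `h`:
    (hWA : ∀ V : Set X, IsOpen V → V.Nonempty → ∀ j : I,
      ∀ S : Set X, BaireMeasurableSet S → (∀ m : ℕ, ¬ IsMeagre (S \ E m)) →
        ((⋃ (i : I) (_ : j ≤ i), h i '' V) ∩ S).Nonempty)
    (S : ℕ → Set X) (hS : ∀ k, BaireMeasurableSet (S k))
    (hUnb : ∀ k, ∀ m : ℕ, ¬ IsMeagre (S k \ E m)) :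
    ∃ N : Set X, IsMeagre N ∧ ∀ η : X, η ∉ N → ∀ k : ℕ,
      ∃ J : Set I, (∀ j : I, ∃ i ∈ J, j ≤ i) ∧ ∀ i ∈ J, h i η ∈ S k := by
  -- The key set: points whose orbit beyond `j` hits `S k`.
  set T : ℕ → I → Set X := fun k j => ⋃ (i : I) (_ : j ≤ i), (h i) ⁻¹' (S k) with hT
  -- Each `T k j` is comeagre.
  have hTres : ∀ k j, T k j ∈ residual X := by
    intro k j
    by_contra hne
    -- `T k j` is Baire measurable
    have hTB : BaireMeasurableSet (T k j) := by
      refine BaireMeasurableSet.iUnion fun i => BaireMeasurableSet.iUnion fun _ => ?_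
      exact (hS k).preimage (h i).continuous (h i).isOpenMap
    obtain ⟨U, hUopen, hUeq⟩ := hTB.compl.residualEq_isOpen
    -- `U` is nonempty
    have hUne : U.Nonempty := by
      rcases eq_empty_or_nonempty U with rfl | hne'
      · exfalso
        exact hne (by
            have : {x | x ∈ (T k j)ᶜ ↔ x ∈ (∅ : Set X)} ∈ residual X :=
              eventuallyEq_set.mp hUeq
            have hsub : {x | x ∈ (T k j)ᶜ ↔ x ∈ (∅ : Set X)} ⊆ T k j := by
              intro x hx
              by_contra hxT
              exact (hx.mp hxT)
            exact mem_of_superset this hsub)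
      · exact hne'
    -- `T k j ∩ U` is meagre
    have hTU : IsMeagre (T k j ∩ U) := by
      have hG : {x | x ∈ (T k j)ᶜ ↔ x ∈ U} ∈ residual X := eventuallyEq_set.mp hUeq
      have : IsMeagre {x | x ∈ (T k j)ᶜ ↔ x ∈ U}ᶜ := by
        rw [IsMeagre, compl_compl]; exact hG
      refine this.mono ?_
      intro x ⟨hxT, hxU⟩ hx
      exact (hx.mpr hxU) hxT
    -- The forward images of `T k j ∩ U` form a meagre set `M`
    set M : Set X := ⋃ (i : I) (_ : j ≤ i), h i '' (T k j ∩ U) with hM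
    have hMmeagre : IsMeagre M := by
      rw [IsMeagre, hM, compl_iUnion]
      refine (countable_iInter_mem).mpr fun i => ?_
      rw [compl_iUnion]
      refine (countable_iInter_mem).mpr fun _ => ?_
      rw [show ⇑(h i) '' (T k j ∩ U) = ⇑(h i).symm ⁻¹' (T k j ∩ U) from Equiv.image_eq_preimage_symm _ _]
      exact hTU.preimage_of_isOpenMap (h i).symm.continuous (h i).symm.isOpenMap
    -- `S k \ M` is still essentially unbounded and Baire measurable
    have hS'B : BaireMeasurableSet (S k \ M) := (hS k).diff hMmeagre.baireMeasurableSet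
    have hS'unb : ∀ m : ℕ, ¬ IsMeagre ((S k \ M) \ E m) := by
      intro m hm
      refine hUnb k m ?_
      have hsub : S k \ E m ⊆ ((S k \ M) \ E m) ∪ M := by
        intro x ⟨hx1, hx2⟩
        by_cases hxM : x ∈ M
        · exact Or.inr hxM
        · exact Or.inl ⟨⟨hx1, hxM⟩, hx2⟩
      have hun : IsMeagre (((S k \ M) \ E m) ∪ M) := by
        rw [IsMeagre, compl_union]
        exact inter_mem hm hMmeagre
      exact hun.mono hsub
    -- Apply the weak Archimedean property to get a contradiction
    obtain ⟨x, hxU', hxS, hxM⟩ := hWA U hUopen hUne j (S k \ M) hS'B hS'unb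
    simp only [mem_iUnion] at hxU'
    obtain ⟨i, hji, v, hvU, hvx⟩ := hxU'
    have hvT : v ∈ T k j := by
      rw [hT]
      simp only [mem_iUnion]
      exact ⟨i, hji, by simp [hvx, hxS]⟩
    exact hxM (by
      rw [hM]
      simp only [mem_iUnion]
      exact ⟨i, hji, v, ⟨hvT, hvU⟩, hvx⟩)
  -- Define the exceptional set `N`
  refine ⟨(⋂ (k : ℕ) (j : I), T k j)ᶜ, ?_, ?_⟩
  · rw [IsMeagre, compl_compl]
    exact (countable_iInter_mem).mpr fun k => (countable_iInter_mem).mpr fun j => hTres k j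
  · intro η hη k
    rw [notMem_compl_iff, mem_iInter] at hη
    have hη' := hη k
    rw [mem_iInter] at hη'
    refine ⟨{i : I | h i η ∈ S k}, ?_, fun i hi => hi⟩
    intro j
    have := hη' j
    rw [hT] at this
    simp only [mem_iUnion] at this
    obtain ⟨i, hji, hi⟩ := this
    exact ⟨i, hi, hji⟩
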